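/- For any two lists A and B, if L is a longest common subsequence of A and B (L is a sublist of both, |L| = lcsLen(A,B)), then d(A,B) ≤ d(A,L) + d(L,B). -/

import Mathlib

open List

noncomputable def H (n : ℕ) : ℝ := ∑ i ∈ Finset.range n, (1 : ℝ) / (i + 1)

noncomputable def lcsLen {α : Type*} (A B : List α) : ℕ :=
  sSup {n : ℕ | ∃ L : List α, L.Sublist A ∧ L.Sublist B ∧ L.length = n}

noncomputable def d {α : Type*} (A B : List α) : ℝ :=
  2 * H (A.length + B.length - lcsLen A B) - H A.length - H B.length

lemma lcsLen_of_sublist {α : Type*} (A L : List α) (hA : L.Sublist A) :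
    lcsLen A L = L.length := by
  apply _root_.le_antisymm
  · refine csSup_le ⟨L.length, L, hA, Sublist.refl L, rfl⟩ ?_
    rintro n ⟨M, -, hML, rfl⟩
    exact hML.length_le
  · apply le_csSup
    · exact ⟨L.length, fun n ⟨M, _, hML, hn⟩ => hn ▸ hML.length_le⟩
    · exact ⟨L, hA, Sublist.refl L, rfl⟩

lemma H_add (n k : ℕ) : H (n + k) = H n + ∑ i ∈ Finset.range k, (1 : ℝ) / (n + i + 1) := by
  induction k with
  | zero => simp
  | succ k ih =>
    rw [← Nat.add_assoc, H, Finset.sum_range_succ, ← H, ih, Finset.sum_range_succ]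
    push_cast
    ring

lemma H_key {l a b : ℕ} (hla : l ≤ a) (hlb : l ≤ b) :
    H (a + b - l) + H l ≤ H a + H b := by
  obtain ⟨s, rfl⟩ := Nat.exists_eq_add_of_le hla
  have h1 : l + s + b - l = b + s := by omega
  rw [h1, H_add b s, H_add l s]
  have : ∑ i ∈ Finset.range s, (1 : ℝ) / (b + i + 1) ≤
      ∑ i ∈ Finset.range s, (1 : ℝ) / (l + i + 1) := by
    apply Finset.sum_le_sum
    intro i _
    apply one_div_le_one_div_of_le
    · positivity
    · have : (l : ℝ) ≤ b := by exact_mod_cast hlb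
      linarith
  linarith

theorem stmt12 {α : Type*} (A B L : List α) (hA : L.Sublist A) (hB : L.Sublist B)
    (hlen : L.length = lcsLen A B) : d A B ≤ d A L + d L B := by
  have h1 : lcsLen A L = L.length := lcsLen_of_sublist A L hA
  have h2 : lcsLen L B = L.length := by
    have := lcsLen_of_sublist B L hB
    rw [← this]
    unfold lcsLen
    congr 1
    ext n
    exact ⟨fun ⟨M, h1, h2, h3⟩ => ⟨M, h2, h1, h3⟩, fun ⟨M, h1, h2, h3⟩ => ⟨M, h2, h1, h3⟩⟩
  have hla : L.length ≤ A.length := hA.length_le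
  have hlb : L.length ≤ B.length := hB.length_le
  have e1 : A.length + L.length - lcsLen A L = A.length := by omega
  have e2 : L.length + B.length - lcsLen L B = B.length := by omega
  have key := H_key hla hlb
  simp only [d, e1, e2, ← hlen]
  linarith
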